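/- For M > 0, the function r(λ) = [3M(λ²-1) + M√(9(λ²-1)² + 32λ²)]/(2λ²) is monotone increasing in λ on (0,∞) and tends to 3M as λ → ∞. -/

import Mathlib

open Filter

private lemma key_sqrt (u : ℝ) : 9*u + 7 < 3 * Real.sqrt (9*u^2 + 14*u + 9) := by
  have hA : (0:ℝ) ≤ 9*u^2 + 14*u + 9 := by nlinarith [sq_nonneg (3*u + 7/3)]
  have hs := Real.sq_sqrt hA
  have hn := Real.sqrt_nonneg (9*u^2 + 14*u + 9)
  nlinarith [sq_nonneg (3*Real.sqrt (9*u^2 + 14*u + 9) - (9*u + 7))]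

private lemma g_anti {u v : ℝ} (huv : u < v) :
    3 - 3*v + Real.sqrt (9*v^2 + 14*v + 9) < 3 - 3*u + Real.sqrt (9*u^2 + 14*u + 9) := by
  have hAu : (0:ℝ) ≤ 9*u^2 + 14*u + 9 := by nlinarith [sq_nonneg (3*u + 7/3)]
  have hAv : (0:ℝ) ≤ 9*v^2 + 14*v + 9 := by nlinarith [sq_nonneg (3*v + 7/3)]
  have hsu := Real.sq_sqrt hAu
  have hsv := Real.sq_sqrt hAv
  have hnu := Real.sqrt_nonneg (9*u^2 + 14*u + 9)
  have hnv := Real.sqrt_nonneg (9*v^2 + 14*v + 9)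
  have hk := key_sqrt u
  nlinarith [mul_pos (sub_pos.2 huv) (sub_pos.2 hk),
    sq_nonneg (Real.sqrt (9*u^2 + 14*u + 9) + 3*(v-u) - Real.sqrt (9*v^2 + 14*v + 9)),
    sq_nonneg (Real.sqrt (9*u^2 + 14*u + 9) + 3*(v-u) + Real.sqrt (9*v^2 + 14*v + 9))]

private lemma expr_eq (M : ℝ) {lam : ℝ} (hl : 0 < lam) :
    (3 * M * (lam ^ 2 - 1) +
        M * Real.sqrt (9 * (lam ^ 2 - 1) ^ 2 + 32 * lam ^ 2)) / (2 * lam ^ 2)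
      = M/2 * (3 - 3*(1/lam^2) + Real.sqrt (9*(1/lam^2)^2 + 14*(1/lam^2) + 9)) := by
  have hl2 : (0:ℝ) < lam ^ 2 := by positivity
  have h1 : 9 * (lam ^ 2 - 1) ^ 2 + 32 * lam ^ 2
      = (lam^2)^2 * (9*(1/lam^2)^2 + 14*(1/lam^2) + 9) := by
    field_simp; ring
  rw [h1, Real.sqrt_mul (sq_nonneg _), Real.sqrt_sq hl2.le]
  field_simp

theorem root_monotone_and_limit (M : ℝ) (hM : 0 < M) :
    StrictMonoOn (fun lam : ℝ =>
        (3 * M * (lam ^ 2 - 1) +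
          M * Real.sqrt (9 * (lam ^ 2 - 1) ^ 2 + 32 * lam ^ 2)) / (2 * lam ^ 2))
      (Set.Ioi 0) ∧
    Tendsto (fun lam : ℝ =>
        (3 * M * (lam ^ 2 - 1) +
          M * Real.sqrt (9 * (lam ^ 2 - 1) ^ 2 + 32 * lam ^ 2)) / (2 * lam ^ 2))
      atTop (nhds (3 * M)) := by
  constructor
  · intro a ha b hb hab
    simp only [Set.mem_Ioi] at ha hb
    simp only []
    rw [expr_eq M ha, expr_eq M hb]
    have h : 1/b^2 < 1/a^2 := by
      apply one_div_lt_one_div_of_lt (by positivity)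
      exact pow_lt_pow_left₀ hab ha.le two_ne_zero
    have := g_anti h
    nlinarith
  · have hcont : Continuous (fun u : ℝ =>
        M/2 * (3 - 3*u + Real.sqrt (9*u^2 + 14*u + 9))) := by
      fun_prop
    have h1 : Tendsto (fun lam : ℝ => 1/lam^2) atTop (nhds 0) := by
      simp only [one_div]
      exact tendsto_inv_atTop_zero.comp (tendsto_pow_atTop two_ne_zero)
    have h9 : Real.sqrt 9 = 3 := by
      rw [show (9:ℝ) = 3^2 by norm_num, Real.sqrt_sq (by norm_num)]
    have h2 : Tendsto (fun lam : ℝ =>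
        M/2 * (3 - 3*(1/lam^2) + Real.sqrt (9*(1/lam^2)^2 + 14*(1/lam^2) + 9)))
        atTop (nhds (3 * M)) := by
      have h3 := (hcont.tendsto 0).comp h1
      simp only [Function.comp_def] at h3
      have h0 : M/2 * (3 - 3*(0:ℝ) + Real.sqrt (9*0^2 + 14*0 + 9)) = 3 * M := by
        norm_num [h9]; ring
      rwa [h0] at h3
    apply h2.congr'
    filter_upwards [eventually_gt_atTop (0:ℝ)] with lam hl
    rw [expr_eq M hl]
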